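/- A nonzero element x = a_0 + 2a_1 + u a_2 + 2u a_3 of the Galois extension GR(R,r), with a_0, a_1, a_2, a_3 Teichmüller representatives, is a unit if and only if a_0 is nonzero; moreover x^4 = a_0^4 for every x in GR(R,r). -/

import Mathlib

set_option maxSynthPendingDepth 3
set_option maxHeartbeats 1000000
set_option synthInstance.maxHeartbeats 400000

open DualNumber TrivSqZeroExt Polynomial

/-- The ring `R = ℤ₄[u]/(u²)`, realized as dual numbers over `ℤ₄`. -/
abbrev R4 := DualNumber (ZMod 4)

/-- Reduction `R → R/(2,u) ≅ 𝔽₂` modulo the maximal ideal `(2,u)`. -/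
noncomputable def res : R4 →+* ZMod 2 :=
  (ZMod.castHom (show 2 ∣ 4 by norm_num) (ZMod 2)).comp
    (fstHom (ZMod 4) (ZMod 4) (ZMod 4)).toRingHom

/-- The image of `u` in the Galois extension `GR(R,r) = R[x]/(f)`. -/
noncomputable def uGR (f : Polynomial R4) : Polynomial R4 ⧸ Ideal.span {f} :=
  Ideal.Quotient.mk (Ideal.span {f}) (C eps)

lemma h4R : (4 : R4) = 0 := by
  have h : ((4:ℕ) : R4) = inl ((4:ℕ) : ZMod 4) := by rw [TrivSqZeroExt.inl_natCast]
  have h2 : ((4:ℕ) : ZMod 4) = 0 := by decide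
  rw [h2] at h
  simpa using h

lemma splitR4 (a : R4) : a = inl a.fst + eps * inl a.snd := by
  apply TrivSqZeroExt.ext <;> simp

lemma decompR4 (a : R4) (ha : res a = 0) : ∃ y z : ZMod 4, a = 2 * inl y + eps * inl z := by
  have hfst : (ZMod.castHom (show (2:ℕ)∣4 by norm_num) (ZMod 2)) a.fst = 0 := ha
  have hy : ∃ y : ZMod 4, a.fst = 2*y := by
    generalize a.fst = x at hfst ⊢
    revert hfst; revert x; decide
  obtain ⟨y, hy⟩ := hy
  refine ⟨y, a.snd, ?_⟩
  conv_lhs => rw [splitR4 a]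
  rw [hy]
  congr 1
  have h2 : ((2:R4)) = inl (2 : ZMod 4) := by
    have := TrivSqZeroExt.inl_natCast (M := ZMod 4) (R := ZMod 4) (2:ℕ)
    push_cast at this; exact this.symm
  rw [h2, TrivSqZeroExt.inl_mul_inl]

lemma tripleR4 (a b c : R4) (ha : res a = 0) (hb : res b = 0) (hc : res c = 0) :
    a * b * c = 0 := by
  obtain ⟨y1, z1, rfl⟩ := decompR4 a ha
  obtain ⟨y2, z2, rfl⟩ := decompR4 b hb
  obtain ⟨y3, z3, rfl⟩ := decompR4 c hc
  have h4 := h4R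
  have he : (ε : R4) * ε = 0 := eps_mul_eps
  set Y1 : R4 := inl y1; set Y2 : R4 := inl y2; set Y3 : R4 := inl y3
  set Z1 : R4 := inl z1; set Z2 : R4 := inl z2; set Z3 : R4 := inl z3
  linear_combination (2*Y1*Y2*Y3 + ε*(Y1*Y2*Z3 + Y1*Y3*Z2 + Y2*Y3*Z1)) * h4
    + (2*(Y1*Z2*Z3 + Y2*Z1*Z3 + Y3*Z1*Z2) + ε*Z1*Z2*Z3) * he

lemma res_surj : Function.Surjective res := by
  intro t
  have : ∃ x : ZMod 4, (ZMod.castHom (show (2:ℕ)∣4 by norm_num) (ZMod 2)) x = t := by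
    revert t; decide
  obtain ⟨x, hx⟩ := this
  exact ⟨inl x, hx⟩

/-- The residue map `GR(R,r) → 𝔽₂[x]/(f mod (2,u))`. -/
noncomputable def phi (f : Polynomial R4) :
    (Polynomial R4 ⧸ Ideal.span {f}) →+* (Polynomial (ZMod 2) ⧸ Ideal.span {f.map res}) :=
  Ideal.Quotient.lift _ ((Ideal.Quotient.mk _).comp (Polynomial.mapRingHom res)) (by
    intro p hp
    rw [Ideal.mem_span_singleton] at hp
    obtain ⟨g, rfl⟩ := hp
    simp only [RingHom.comp_apply, Polynomial.coe_mapRingHom, Polynomial.map_mul]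
    rw [Ideal.Quotient.eq_zero_iff_mem]
    exact Ideal.mem_span_singleton.2 ⟨g.map res, rfl⟩)

lemma phi_mk (f p : Polynomial R4) :
    phi f (Ideal.Quotient.mk (Ideal.span {f}) p)
      = Ideal.Quotient.mk (Ideal.span {f.map res}) (p.map res) := rfl

lemma cube_zero (f : Polynomial R4) (s : Polynomial R4 ⧸ Ideal.span {f})
    (hs : phi f s = 0) : s ^ 3 = 0 := by
  obtain ⟨p, rfl⟩ := Ideal.Quotient.mk_surjective s
  rw [phi_mk, Ideal.Quotient.eq_zero_iff_mem, Ideal.mem_span_singleton] at hs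
  obtain ⟨h, hh⟩ := hs
  obtain ⟨g, hg⟩ := Polynomial.map_surjective res res_surj h
  set q := p - f * g with hq
  have hmk : Ideal.Quotient.mk (Ideal.span {f}) p = Ideal.Quotient.mk _ q := by
    rw [Ideal.Quotient.eq, hq]
    have : p - (p - f * g) = f * g := by ring
    rw [this]
    exact Ideal.mul_mem_right _ _ (Ideal.subset_span rfl)
  have hcoeff : ∀ n, res (q.coeff n) = 0 := by
    intro n
    have h0 : q.map res = 0 := by
      rw [hq, Polynomial.map_sub, Polynomial.map_mul, hh, hg]
      ring
    have := congrArg (fun P => Polynomial.coeff P n) h0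
    simpa [Polynomial.coeff_map] using this
  have hq3 : q * q * q = 0 := by
    refine Polynomial.ext fun n => ?_
    rw [Polynomial.coeff_zero, Polynomial.coeff_mul]
    refine Finset.sum_eq_zero ?_
    rintro ⟨i, j⟩ _
    rw [Polynomial.coeff_mul, Finset.sum_mul]
    refine Finset.sum_eq_zero ?_
    rintro ⟨k, l⟩ _
    exact tripleR4 _ _ _ (hcoeff k) (hcoeff l) (hcoeff j)
  rw [hmk, pow_succ, pow_two, ← map_mul, ← map_mul, hq3, map_zero]

lemma uGR_sq (f : Polynomial R4) : uGR f * uGR f = 0 := by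
  unfold uGR
  rw [← map_mul, ← C_mul, eps_mul_eps, map_zero, map_zero]

/-- In the Galois extension `GR(R,r) = R[x]/(f)` of `R = ℤ₄[u]/(u²)` (with `f`
monic basic irreducible of degree `r`), a nonzero element
`x = a₀ + 2a₁ + u a₂ + 2u a₃` with Teichmüller coordinates `a₀,a₁,a₂,a₃`
(i.e. `aᵢ^(2^r) = aᵢ`) is a unit iff `a₀ ≠ 0`; moreover `x⁴ = a₀⁴`. -/
theorem stmt8 (r : ℕ) (hr : 1 ≤ r) (f : Polynomial R4) (hmonic : f.Monic)
    (hirr : Irreducible (f.map res)) (hdeg : f.natDegree = r)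
    (a0 a1 a2 a3 : Polynomial R4 ⧸ Ideal.span {f})
    (h0 : a0 ^ 2 ^ r = a0) (h1 : a1 ^ 2 ^ r = a1)
    (h2 : a2 ^ 2 ^ r = a2) (h3 : a3 ^ 2 ^ r = a3) :
    (a0 + 2 * a1 + uGR f * a2 + 2 * (uGR f) * a3 ≠ 0 →
      (IsUnit (a0 + 2 * a1 + uGR f * a2 + 2 * (uGR f) * a3) ↔ a0 ≠ 0)) ∧
    (a0 + 2 * a1 + uGR f * a2 + 2 * (uGR f) * a3) ^ 4 = a0 ^ 4 := by
  set u : Polynomial R4 ⧸ Ideal.span {f} := uGR f with hu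
  have h4S : (4 : Polynomial R4 ⧸ Ideal.span {f}) = 0 := by
    have h1 : ((4:ℕ) : Polynomial R4 ⧸ Ideal.span {f})
        = Ideal.Quotient.mk (Ideal.span {f}) ((4:ℕ) : Polynomial R4) :=
      (map_natCast _ _).symm
    have h2 : ((4:ℕ) : Polynomial R4) = C ((4:ℕ) : R4) := by
      rw [Polynomial.C_eq_natCast]
    have h3 : ((4:ℕ) : R4) = 0 := by push_cast; exact h4R
    rw [h2, h3, map_zero, map_zero] at h1
    simpa using h1
  have hu2 : u * u = 0 := uGR_sq f
  have hn2 : (2*a1 + u*a2 + 2*u*a3) * (2*a1 + u*a2 + 2*u*a3) = 0 := by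
    linear_combination (a1^2 + u*a1*a2 + 2*u*a1*a3 + u^2*a2*a3 + u^2*a3^2) * h4S
      + (a2^2) * hu2
  have hx4 : (a0 + 2 * a1 + u * a2 + 2 * u * a3) ^ 4 = a0 ^ 4 := by
    linear_combination (a0^3*(2*a1 + u*a2 + 2*u*a3)) * h4S
      + (6*a0^2 + 4*a0*(2*a1 + u*a2 + 2*u*a3)
          + (2*a1 + u*a2 + 2*u*a3)*(2*a1 + u*a2 + 2*u*a3)) * hn2
  refine ⟨?_, hx4⟩
  intro hx
  have hm : 2 ≤ 2 ^ r := by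
    calc 2 = 2^1 := (pow_one 2).symm
    _ ≤ 2^r := Nat.pow_le_pow_right (by norm_num) hr
  constructor
  · -- unit → a0 ≠ 0
    intro hux ha0
    have hxn : (a0 + 2 * a1 + u * a2 + 2 * u * a3) * (a0 + 2 * a1 + u * a2 + 2 * u * a3) = 0 := by
      rw [ha0]
      linear_combination hn2
    have : IsUnit ((a0 + 2 * a1 + u * a2 + 2 * u * a3)
        * (a0 + 2 * a1 + u * a2 + 2 * u * a3)) := hux.mul hux
    rw [hxn] at this
    have h01 : (0 : Polynomial R4 ⧸ Ideal.span {f}) = 1 := isUnit_zero_iff.mp this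
    exact hx (by
      have : Subsingleton (Polynomial R4 ⧸ Ideal.span {f}) :=
        subsingleton_of_zero_eq_one h01
      exact Subsingleton.elim _ _)
  · -- a0 ≠ 0 → unit
    intro ha0
    haveI hmax : (Ideal.span {f.map res}).IsMaximal :=
      PrincipalIdealRing.isMaximal_of_irreducible hirr
    letI : Field (Polynomial (ZMod 2) ⧸ Ideal.span {f.map res}) := Ideal.Quotient.field _
    have hphi : phi f a0 ≠ 0 := by
      intro hz
      have h3 : a0 ^ 3 = 0 := cube_zero f a0 hz
      have hmm : a0 ^ (2^r * 2^r) = a0 := by rw [pow_mul, h0, h0]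
      have hm4 : 4 ≤ 2^r * 2^r := Nat.mul_le_mul hm hm
      have : a0 = 0 := by
        rw [← hmm, show 2^r * 2^r = 3 + (2^r * 2^r - 3) by omega, pow_add, h3, zero_mul]
      exact ha0 this
    set e := a0 ^ (2^r - 1) with he
    have he2 : e * e = e := by
      rw [he, ← pow_add, show 2^r - 1 + (2^r - 1) = 2^r + (2^r - 2) by omega, pow_add, h0,
        show a0 * a0 ^ (2^r - 2) = a0 ^ (1 + (2^r-2)) by rw [pow_add, pow_one],
        show 1 + (2^r - 2) = 2^r - 1 by omega]
    have hphie : phi f e = 0 ∨ phi f e = 1 := by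
      have hq : phi f e * (phi f e - 1) = 0 := by
        have := congrArg (phi f) he2
        rw [map_mul] at this
        linear_combination this
      rcases mul_eq_zero.mp hq with h | h
      · exact Or.inl h
      · exact Or.inr (by linear_combination h)
    have he1 : e = 1 := by
      rcases hphie with h | h
      · exfalso
        apply hphi
        have ha : a0 * e = a0 := by
          rw [he, show a0 * a0 ^ (2^r - 1) = a0 ^ (1 + (2^r-1)) by rw [pow_add, pow_one],
            show 1 + (2^r - 1) = 2^r by omega, h0]
        have := congrArg (phi f) ha
        rw [map_mul, h, mul_zero] at this
        exact this.symm
      · have hker : phi f (1 - e) = 0 := by rw [map_sub, map_one, h, sub_self]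
        have hc := cube_zero f (1 - e) hker
        have : 1 - e = 0 := by
          have hc' : (1 - e)^3 = 0 := hc
          linear_combination hc' + (e - 2) * he2
        linear_combination -this
    have hua0 : IsUnit a0 := by
      apply IsUnit.of_mul_eq_one (a := a0) (a0 ^ (2^r - 2))
      rw [show a0 * a0 ^ (2^r - 2) = a0 ^ (1 + (2^r-2)) by rw [pow_add, pow_one],
        show 1 + (2^r - 2) = 2^r - 1 by omega, ← he, he1]
    have hnil : IsNilpotent (2*a1 + u*a2 + 2*u*a3) := ⟨2, by rw [pow_two]; exact hn2⟩
    have hgoal : a0 + 2 * a1 + u * a2 + 2 * u * a3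
        = a0 + (2*a1 + u*a2 + 2*u*a3) := by ring
    rw [hgoal]
    exact hnil.isUnit_add_left_of_commute hua0 (Commute.all _ _)
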